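/- Let n ≥ 3 and let b satisfy n^2/(n-1) < b < 2n, with h* = ⌊n^2/b⌋ (so 1 ≤ h* < n-1). Define Q = (n + √((b(h*+1) - n^2)/h*))/(h*+1) and P = 1 + √((b-n)/(n(n-1))). Then Q ≥ P. -/

import Mathlib

theorem Q_ge_P (n : ℕ) (hn : 3 ≤ n) (b : ℝ)
    (hb1 : (n : ℝ) ^ 2 / ((n : ℝ) - 1) < b) (hb2 : b < 2 * n)
    (h : ℕ) (hh : h = ⌊(n : ℝ) ^ 2 / b⌋₊) (hh1 : 1 ≤ h) (hh2 : h < n - 1) :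
    ((n : ℝ) + Real.sqrt ((b * ((h : ℝ) + 1) - (n : ℝ) ^ 2) / h)) / ((h : ℝ) + 1) ≥
      1 + Real.sqrt ((b - n) / ((n : ℝ) * ((n : ℝ) - 1))) := by
  have hn3 : (3:ℝ) ≤ (n:ℝ) := by exact_mod_cast hn
  have hh1' : (1:ℝ) ≤ (h:ℝ) := by exact_mod_cast hh1
  have hhn : (h:ℝ) ≤ (n:ℝ) - 2 := by
    have h2 : h + 2 ≤ n := by omega
    have : ((h:ℝ) + 2) ≤ (n:ℝ) := by exact_mod_cast h2
    linarith
  have hN1 : (0:ℝ) < (n:ℝ) - 1 := by linarith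
  have hbn : (n:ℝ) ≤ b := by
    rw [div_lt_iff₀ hN1] at hb1
    nlinarith
  set t := Real.sqrt ((b - n) / ((n : ℝ) * ((n : ℝ) - 1))) with htdef
  have ht0 : 0 ≤ t := Real.sqrt_nonneg _
  have ht2 : t ^ 2 = (b - n) / ((n : ℝ) * ((n : ℝ) - 1)) := by
    rw [htdef, sq, Real.mul_self_sqrt]
    apply div_nonneg (by linarith)
    nlinarith
  have htb : b = (n:ℝ) + (n:ℝ) * ((n:ℝ) - 1) * t ^ 2 := by
    rw [ht2]
    field_simp
    ring
  set s := Real.sqrt ((b * ((h : ℝ) + 1) - (n : ℝ) ^ 2) / h) with hsdef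
  have hs0 : 0 ≤ s := Real.sqrt_nonneg _
  have hH1 : (0:ℝ) < (h:ℝ) + 1 := by linarith
  rw [ge_iff_le, le_div_iff₀ hH1]
  by_cases hcase : (1 + t) * ((h:ℝ) + 1) ≤ (n:ℝ)
  · linarith
  · push_neg at hcase
    have hx0 : 0 ≤ ((h:ℝ) + 1) * t - ((n:ℝ) - (h:ℝ) - 1) := by nlinarith
    have main : (b * ((h:ℝ) + 1) - (n:ℝ) ^ 2
          - (h:ℝ) * (((h:ℝ) + 1) * t - ((n:ℝ) - (h:ℝ) - 1)) ^ 2) * ((h:ℝ) + 1)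
        = ((n:ℝ) - (h:ℝ) - 1) *
          ((((h:ℝ) + 1) * t - ((n:ℝ) - (h:ℝ) - 1)) *
              (((n:ℝ) + (h:ℝ)) * (((h:ℝ) + 1) * t + ((n:ℝ) - (h:ℝ) - 1))
                + 2 * (h:ℝ) * ((h:ℝ) + 1))
            + ((n:ℝ) - (h:ℝ) - 2) * (n:ℝ) ^ 2) := by
      rw [htb]; ring
    have hkey : (h:ℝ) * (((h:ℝ) + 1) * t - ((n:ℝ) - (h:ℝ) - 1)) ^ 2
        ≤ b * ((h:ℝ) + 1) - (n:ℝ) ^ 2 := by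
      have f1 : 0 ≤ ((n:ℝ) + (h:ℝ)) * (((h:ℝ) + 1) * t + ((n:ℝ) - (h:ℝ) - 1))
          + 2 * (h:ℝ) * ((h:ℝ) + 1) := by nlinarith
      have f2 : 0 ≤ ((n:ℝ) - (h:ℝ) - 2) * (n:ℝ) ^ 2 := by nlinarith
      have hX : 0 ≤ (((h:ℝ) + 1) * t - ((n:ℝ) - (h:ℝ) - 1)) *
              (((n:ℝ) + (h:ℝ)) * (((h:ℝ) + 1) * t + ((n:ℝ) - (h:ℝ) - 1))
                + 2 * (h:ℝ) * ((h:ℝ) + 1))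
            + ((n:ℝ) - (h:ℝ) - 2) * (n:ℝ) ^ 2 :=
        add_nonneg (mul_nonneg hx0 f1) f2
      have h9 : 0 ≤ (b * ((h:ℝ) + 1) - (n:ℝ) ^ 2
          - (h:ℝ) * (((h:ℝ) + 1) * t - ((n:ℝ) - (h:ℝ) - 1)) ^ 2) * ((h:ℝ) + 1) := by
        rw [main]
        exact mul_nonneg (by linarith) hX
      have h10 := (mul_nonneg_iff_of_pos_right hH1).mp h9
      linarith
    have hle : ((h:ℝ) + 1) * t - ((n:ℝ) - (h:ℝ) - 1) ≤ s := by
      rw [hsdef]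
      rw [show ((h:ℝ) + 1) * t - ((n:ℝ) - (h:ℝ) - 1)
          = Real.sqrt ((((h:ℝ) + 1) * t - ((n:ℝ) - (h:ℝ) - 1)) ^ 2) from
        (Real.sqrt_sq hx0).symm]
      apply Real.sqrt_le_sqrt
      rw [le_div_iff₀ (by linarith : (0:ℝ) < (h:ℝ))]
      linarith [hkey]
    linarith [hle]
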